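/- Let Q = (x_Q, y_Q) with x_Q > 0 and κ(η) x_Q + y_Q > 0. Assume K₁ < 0 < K₂ and α₁ ≥ α₂ ≥ κ(η). Then ⟨F₁(Q), J F₂(Q)⟩ = (α₁ - α₂)((n-2) x_Q y_Q + y_Q² + η x_Q²) - (α₂ x_Q + y_Q) K₁ x_Q^{q₁-1} + (α₁ x_Q + y_Q) K₂ x_Q^{q₂-1}, and this quantity is strictly positive. (In particular the vector fields F₁ and F₂ are transversal at every point of the region {x > 0, κ(η)x + y > 0}.) -/
import Mathlib


open Real Filter Topology Set

noncomputable section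

/-- κ(η) = ((n-2) - √((n-2)²-4η))/2. -/
def kappa (n : ℕ) (η : ℝ) : ℝ :=
  (((n:ℝ) - 2) - Real.sqrt (((n:ℝ) - 2) ^ 2 - 4 * η)) / 2

/-- The planar vector field F_i(x,y) = (α x + y, -ηx + γ y - K x|x|^{q-2}). -/
def vecF (η K q α γ : ℝ) (P : ℝ × ℝ) : ℝ × ℝ :=
  (α * P.1 + P.2, -η * P.1 + γ * P.2 - K * P.1 * |P.1| ^ (q - 2))

/-- Rotation by π/2: J(a,b) = (-b,a). -/
def rotJ (P : ℝ × ℝ) : ℝ × ℝ := (-P.2, P.1)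

/-- Euclidean scalar product on ℝ². -/
def dot2 (P Q : ℝ × ℝ) : ℝ := P.1 * Q.1 + P.2 * Q.2

theorem stmt14 (n : ℕ) (hn : 2 < n) (η q₁ q₂ K₁ K₂ α₁ α₂ γ₁ γ₂ : ℝ)
    (hη : η < ((n:ℝ) - 2) ^ 2 / 4)
    (hq₁ : 2 < q₁) (hq₂ : 2 < q₂)
    (hα₁ : 0 < α₁) (hα₂ : 0 < α₂)
    (hγ₁ : γ₁ = α₁ + 2 - (n:ℝ)) (hγ₂ : γ₂ = α₂ + 2 - (n:ℝ))
    (hK : K₁ < 0) (hK' : 0 < K₂)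
    (hαord : α₂ ≤ α₁) (hακ : kappa n η ≤ α₂)
    (xQ yQ : ℝ) (hxQ : 0 < xQ) (hQ : 0 < kappa n η * xQ + yQ) :
    dot2 (vecF η K₁ q₁ α₁ γ₁ (xQ, yQ)) (rotJ (vecF η K₂ q₂ α₂ γ₂ (xQ, yQ))) =
      (α₁ - α₂) * (((n:ℝ) - 2) * xQ * yQ + yQ ^ 2 + η * xQ ^ 2) -
        (α₂ * xQ + yQ) * K₁ * xQ ^ (q₁ - 1) +
        (α₁ * xQ + yQ) * K₂ * xQ ^ (q₂ - 1) ∧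
    0 < dot2 (vecF η K₁ q₁ α₁ γ₁ (xQ, yQ)) (rotJ (vecF η K₂ q₂ α₂ γ₂ (xQ, yQ))) := by
  have h1 : xQ * xQ ^ (q₁ - 2) = xQ ^ (q₁ - 1) := by
    rw [show q₁ - 1 = 1 + (q₁ - 2) by ring, Real.rpow_add hxQ, Real.rpow_one]
  have h2 : xQ * xQ ^ (q₂ - 2) = xQ ^ (q₂ - 1) := by
    rw [show q₂ - 1 = 1 + (q₂ - 2) by ring, Real.rpow_add hxQ, Real.rpow_one]
  have heq : dot2 (vecF η K₁ q₁ α₁ γ₁ (xQ, yQ)) (rotJ (vecF η K₂ q₂ α₂ γ₂ (xQ, yQ))) =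
      (α₁ - α₂) * (((n:ℝ) - 2) * xQ * yQ + yQ ^ 2 + η * xQ ^ 2) -
        (α₂ * xQ + yQ) * K₁ * xQ ^ (q₁ - 1) +
        (α₁ * xQ + yQ) * K₂ * xQ ^ (q₂ - 1) := by
    simp only [dot2, vecF, rotJ, abs_of_pos hxQ, hγ₁, hγ₂]
    rw [← h1, ← h2]; ring
  refine ⟨heq, ?_⟩
  rw [heq]
  set s := Real.sqrt (((n:ℝ) - 2) ^ 2 - 4 * η) with hs
  have hs0 : 0 ≤ s := Real.sqrt_nonneg _
  have hs2 : s ^ 2 = ((n:ℝ) - 2) ^ 2 - 4 * η :=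
    Real.sq_sqrt (by nlinarith)
  have hκ : kappa n η = (((n:ℝ) - 2) - s) / 2 := rfl
  have hquad : ((n:ℝ) - 2) * xQ * yQ + yQ ^ 2 + η * xQ ^ 2 =
      (yQ + kappa n η * xQ) * (yQ + (((n:ℝ) - 2 + s) / 2) * xQ) := by
    rw [hκ]; linear_combination (xQ ^ 2 / 4) * hs2
  have hp1 : 0 < α₂ * xQ + yQ := by
    have := mul_le_mul_of_nonneg_right hακ hxQ.le; linarith
  have hp2 : 0 < α₁ * xQ + yQ := by
    have := mul_le_mul_of_nonneg_right hαord hxQ.le; linarith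
  have hq1pos : (0:ℝ) < xQ ^ (q₁ - 1) := Real.rpow_pos_of_pos hxQ _
  have hq2pos : (0:ℝ) < xQ ^ (q₂ - 1) := Real.rpow_pos_of_pos hxQ _
  have hsx : 0 ≤ s * xQ := mul_nonneg hs0 hxQ.le
  have hquadpos : 0 ≤ ((n:ℝ) - 2) * xQ * yQ + yQ ^ 2 + η * xQ ^ 2 := by
    rw [hquad]
    have h3 : 0 < yQ + (((n:ℝ) - 2 + s) / 2) * xQ := by
      have : (((n:ℝ) - 2 + s) / 2) * xQ = (((n:ℝ) - 2 - s) / 2) * xQ + s * xQ := by ring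
      rw [hκ] at hQ; linarith [this.ge, this.le]
    exact mul_nonneg (by rw [hκ] at hQ ⊢; linarith) h3.le
  have t1 : 0 ≤ (α₁ - α₂) * (((n:ℝ) - 2) * xQ * yQ + yQ ^ 2 + η * xQ ^ 2) :=
    mul_nonneg (by linarith) hquadpos
  have t2 : 0 < -((α₂ * xQ + yQ) * K₁ * xQ ^ (q₁ - 1)) := by
    have : (α₂ * xQ + yQ) * K₁ * xQ ^ (q₁ - 1) < 0 :=
      mul_neg_of_neg_of_pos (mul_neg_of_pos_of_neg hp1 hK) hq1pos
    linarith
  have t3 : 0 < (α₁ * xQ + yQ) * K₂ * xQ ^ (q₂ - 1) := by positivity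
  linarith

end
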